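/- For each n ≥ 0 there exists a polynomial p_n ∈ ℂ[X] of degree n such that χ_n = p_n(χ₁) in the group algebra ℂ[F_N], where χ_n = ∑_{|w|=n} w. -/

import Mathlib

open FreeGroup Polynomial

private lemma len_cons_aux {α : Type*} [DecidableEq α] (q : α × Bool) (w : FreeGroup α) :
    ((FreeGroup.mk [q]) * w).toWord.length =
      if w.toWord.head? = some (q.1, !q.2) then w.toWord.length - 1
      else w.toWord.length + 1 := by
  have h1 : (FreeGroup.mk [q]) * w = FreeGroup.mk (q :: w.toWord) := by
    conv_lhs => rw [← FreeGroup.mk_toWord (x := w)]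
    rw [FreeGroup.mul_mk]; rfl
  rw [h1, FreeGroup.toWord_mk, FreeGroup.reduce.cons, FreeGroup.reduce_toWord]
  cases h : w.toWord with
  | nil => simp
  | cons a t =>
    obtain ⟨qa, qb⟩ := q
    obtain ⟨aa, ab⟩ := a
    simp only [List.head?_cons, Option.some_inj, Prod.mk.injEq]
    by_cases h1 : qa = aa
    · subst h1
      cases qb <;> cases ab <;> simp
    · rw [if_neg (by tauto), if_neg (by tauto)]
      simp

private lemma chi_mul (N : ℕ) (chi : ℕ → MonoidAlgebra ℂ (FreeGroup (Fin N)))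
    (hchi : ∀ n, ∀ w : FreeGroup (Fin N),
      (chi n).coeff w = if (FreeGroup.toWord w).length = n then 1 else 0)
    (n : ℕ) (hn : 1 ≤ n) :
    chi 1 * chi n = chi (n+1) + (if n = 1 then (2*N : ℂ) else (2*N : ℂ) - 1) • chi (n-1) := by
  have hchi1 : chi 1 = ∑ p : Fin N × Bool, MonoidAlgebra.single (FreeGroup.mk [p]) (1:ℂ) := by
    ext w
    have hterm : ∀ p : Fin N × Bool,
        (MonoidAlgebra.single (FreeGroup.mk [p]) (1:ℂ)).coeff w = if w.toWord = [p] then 1 else 0 := by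
      intro p
      rw [MonoidAlgebra.coeff_single, Finsupp.single_apply]
      congr 1
      rw [eq_iff_iff]
      constructor
      · rintro rfl; rw [FreeGroup.toWord_mk, FreeGroup.reduce_singleton]
      · intro h
        conv_rhs => rw [← FreeGroup.mk_toWord (x := w)]
        rw [h]
    rw [MonoidAlgebra.coeff_sum, Finsupp.finset_sum_apply, Finset.sum_congr rfl (fun p _ => hterm p), hchi]
    cases h : w.toWord with
    | nil => simp
    | cons a t =>
      cases t with
      | nil => simp
      | cons b t' => simp
  ext w
  rw [hchi1, Finset.sum_mul, MonoidAlgebra.coeff_sum, Finsupp.finset_sum_apply]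
  have hterm : ∀ p : Fin N × Bool,
      (MonoidAlgebra.single (FreeGroup.mk [p]) (1:ℂ) * chi n).coeff w
        = if w.toWord.head? = some p then (if w.toWord.length - 1 = n then (1:ℂ) else 0)
          else (if w.toWord.length + 1 = n then (1:ℂ) else 0) := by
    intro p
    rw [MonoidAlgebra.coeff_single_mul_apply, one_mul, FreeGroup.inv_mk]
    have hinv : FreeGroup.invRev [p] = [(p.1, !p.2)] := by simp [FreeGroup.invRev]
    rw [hinv, hchi, len_cons_aux]
    simp only [Bool.not_not]
    by_cases hh : w.toWord.head? = some p
    · simp [hh]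
    · simp [hh]
  rw [Finset.sum_congr rfl (fun p _ => hterm p)]
  rw [MonoidAlgebra.coeff_add, Finsupp.add_apply, MonoidAlgebra.coeff_smul, Finsupp.smul_apply, hchi, hchi, smul_eq_mul]
  cases h : w.toWord with
  | nil =>
    simp only [List.head?_nil, reduceCtorEq, if_false, List.length_nil]
    rw [Finset.sum_const, Finset.card_univ]
    simp only [Fintype.card_prod, Fintype.card_fin, Fintype.card_bool, nsmul_eq_mul]
    split_ifs <;> (first | (push_cast; ring1) | (exfalso; omega))
  | cons a t =>
    have hsum : ∀ (A B : ℂ), (∑ p : Fin N × Bool,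
        if (a :: t).head? = some p then A else B) = A + ((2*N : ℂ) - 1) * B := by
      intro A B
      have : ∀ p : Fin N × Bool,
          (if (a :: t).head? = some p then A else B) = B + (if p = a then A - B else 0) := by
        intro p
        simp only [List.head?_cons, Option.some_inj]
        by_cases hp : p = a
        · rw [if_pos (hp ▸ rfl), if_pos hp]; ring
        · rw [if_neg (fun hh => hp hh.symm), if_neg hp]; ring
      rw [Finset.sum_congr rfl (fun p _ => this p), Finset.sum_add_distrib,
        Finset.sum_const, Finset.card_univ, Finset.sum_ite_eq' Finset.univ a
          (fun _ => A - B), if_pos (Finset.mem_univ a)]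
      simp only [Fintype.card_prod, Fintype.card_fin, Fintype.card_bool, nsmul_eq_mul]
      push_cast
      ring
    rw [hsum]
    simp only [List.length_cons]
    split_ifs <;> (first | (push_cast; ring1) | (exfalso; omega))

/-- Each `χ_n` is a polynomial of degree `n` in `χ₁` in the group algebra `ℂ[F_N]`. -/
theorem stmt_8 (N : ℕ) (hN : 2 ≤ N)
    (chi : ℕ → MonoidAlgebra ℂ (FreeGroup (Fin N)))
    (hchi : ∀ n, ∀ w : FreeGroup (Fin N),
      (chi n).coeff w = if (FreeGroup.toWord w).length = n then 1 else 0)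
    (n : ℕ) :
    ∃ p : Polynomial ℂ, p.natDegree = n ∧ Polynomial.aeval (chi 1) p = chi n := by
  have chi0 : chi 0 = 1 := by
    ext w
    rw [hchi, MonoidAlgebra.one_def, MonoidAlgebra.coeff_single, Finsupp.single_apply]
    congr 1
    rw [eq_iff_iff, List.length_eq_zero_iff, FreeGroup.toWord_eq_nil_iff, eq_comm]
  have key : ∀ m : ℕ,
      (∃ p : Polynomial ℂ, p.Monic ∧ p.natDegree = m ∧ Polynomial.aeval (chi 1) p = chi m) ∧
      (∃ q : Polynomial ℂ, q.Monic ∧ q.natDegree = m + 1 ∧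
        Polynomial.aeval (chi 1) q = chi (m + 1)) := by
    intro m
    induction m with
    | zero =>
      refine ⟨⟨1, monic_one, natDegree_one, by simp [chi0]⟩,
        ⟨X, monic_X, natDegree_X, aeval_X _⟩⟩
    | succ m ih =>
      refine ⟨ih.2, ?_⟩
      obtain ⟨p, hpm, hpd, hpe⟩ := ih.1
      obtain ⟨q, hqm, hqd, hqe⟩ := ih.2
      set c : ℂ := if m + 1 = 1 then (2*N : ℂ) else (2*N : ℂ) - 1 with hc
      have hXq : (X * q).Monic := monic_X.mul hqm
      have hXqd : (X * q).natDegree = m + 2 := by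
        rw [Polynomial.Monic.natDegree_mul monic_X hqm, natDegree_X, hqd]; omega
      have hlt : (C c * p).natDegree < (X * q).natDegree := by
        have h1 : (C c * p).natDegree ≤ p.natDegree := natDegree_C_mul_le _ _
        omega
      refine ⟨X * q - C c * p, hXq.sub_of_left (Polynomial.degree_lt_degree hlt), ?_, ?_⟩
      · rw [natDegree_sub_eq_left_of_natDegree_lt hlt, hXqd]
      · rw [_root_.map_sub, _root_.map_mul, _root_.map_mul, aeval_X, aeval_C, hqe, hpe]
        have hmul := chi_mul N chi hchi (m + 1) (by omega)
        rw [Nat.add_sub_cancel] at hmul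
        rw [hmul, ← hc, Algebra.smul_def]
        exact add_sub_cancel_right _ _
  obtain ⟨⟨p, _, hd, he⟩, _⟩ := key n
  exact ⟨p, hd, he⟩
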